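/- Let Ω₁, Ω₂ be copies of 2^[n], let Δ be the diagonal matrix with (x,x)-entry p^{|x|}(1-p)^{n-|x|}, and let U₁ ⊆ Ω₁, U₂ ⊆ Ω₂ be cross-independent in a bipartite graph G between Ω₁ and Ω₂. Suppose α ∈ ℝ, γ_{x,y} ∈ ℝ for edges x∼y, and entrywise-nonnegative symmetric Z satisfy that S = (1/2)[[αΔ, -ΔJΔ],[-ΔJΔ, αΔ]] + Σ_{x∼y} γ_{x,y}[[0, E_{x,y}],[E_{y,x}, 0]] - Z is positive semidefinite. Then μ_p(U₁)·μ_p(U₂) ≤ α², and if equality holds then S•X = Z•X = 0 where X is the rank-one matrix built from the μ_p-normalized characteristic vectors of U₁ and U₂. -/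

import Mathlib

open Matrix Finset

/-- The product measure of a family U ⊆ 2^[n]. -/
def muP (n : ℕ) (p : ℝ) (U : Finset (Finset (Fin n))) : ℝ :=
  ∑ x ∈ U, p ^ x.card * (1 - p) ^ (n - x.card)

/-- Trace inner product A • B = trace(AᵀB) = Σ_{a,b} A_{ab} B_{ab}. -/
def dotM {m : Type*} [Fintype m] (A B : Matrix m m ℝ) : ℝ :=
  ∑ a, ∑ b, A a b * B a b

/-- The concatenation of the μ_p-normalized characteristic vectors of U₁, U₂. -/
noncomputable def wVec (n : ℕ) (p : ℝ) (U₁ U₂ : Finset (Finset (Fin n))) :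
    (Finset (Fin n) ⊕ Finset (Fin n)) → ℝ :=
  Sum.elim (fun x => (if x ∈ U₁ then 1 else 0) / Real.sqrt (muP n p U₁))
    (fun x => (if x ∈ U₂ then 1 else 0) / Real.sqrt (muP n p U₂))

set_option maxHeartbeats 2000000 in
/-- Measure-setting SDP duality: the feasibility of the dual certificate
(α, γ, Z) yields μ_p(U₁)μ_p(U₂) ≤ α², with complementary slackness
S•X = Z•X = 0 in case of equality, where X = w wᵀ. -/
theorem stmt_16 (n : ℕ) (p : ℝ) (hp0 : 0 < p) (hp1 : p < 1)
    (Adj : Finset (Fin n) → Finset (Fin n) → Prop) [∀ x y, Decidable (Adj x y)]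
    (U₁ U₂ : Finset (Finset (Fin n)))
    (hcross : ∀ x ∈ U₁, ∀ y ∈ U₂, ¬Adj x y)
    (α : ℝ) (γ : Finset (Fin n) → Finset (Fin n) → ℝ)
    (Z S : Matrix (Finset (Fin n) ⊕ Finset (Fin n)) (Finset (Fin n) ⊕ Finset (Fin n)) ℝ)
    (hZsymm : Z.IsSymm) (hZnonneg : ∀ a b, 0 ≤ Z a b)
    (m : Finset (Fin n) → ℝ)
    (hm : ∀ x, m x = p ^ x.card * (1 - p) ^ (n - x.card))
    (hS11 : ∀ x x', S (Sum.inl x) (Sum.inl x')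
      = (1 / 2) * α * (if x = x' then m x else 0) - Z (Sum.inl x) (Sum.inl x'))
    (hS22 : ∀ y y', S (Sum.inr y) (Sum.inr y')
      = (1 / 2) * α * (if y = y' then m y else 0) - Z (Sum.inr y) (Sum.inr y'))
    (hS12 : ∀ x y, S (Sum.inl x) (Sum.inr y)
      = -(1 / 2) * m x * m y + (if Adj x y then γ x y else 0) - Z (Sum.inl x) (Sum.inr y))
    (hS21 : ∀ x y, S (Sum.inr y) (Sum.inl x) = S (Sum.inl x) (Sum.inr y))
    (hSpsd : S.PosSemidef) :
    muP n p U₁ * muP n p U₂ ≤ α ^ 2 ∧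
    (muP n p U₁ * muP n p U₂ = α ^ 2 →
      dotM S (Matrix.of fun a b => wVec n p U₁ U₂ a * wVec n p U₁ U₂ b) = 0 ∧
      dotM Z (Matrix.of fun a b => wVec n p U₁ U₂ a * wVec n p U₁ U₂ b) = 0) := by
  
  classical
  have hterm : ∀ x : Finset (Fin n), 0 < m x := by
    intro x
    rw [hm]
    have h1 : (0:ℝ) < 1 - p := by linarith
    positivity
  set μ₁ := muP n p U₁ with hμ₁def
  set μ₂ := muP n p U₂ with hμ₂def
  have hμ₁0 : 0 ≤ μ₁ := by
    rw [hμ₁def]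
    exact Finset.sum_nonneg fun x _ => le_of_lt (by rw [← hm]; exact hterm x)
  have hμ₂0 : 0 ≤ μ₂ := by
    rw [hμ₂def]
    exact Finset.sum_nonneg fun x _ => le_of_lt (by rw [← hm]; exact hterm x)
  set w := wVec n p U₁ U₂ with hwdef
  have hwl : ∀ x, w (Sum.inl x) = (if x ∈ U₁ then (1:ℝ) else 0) / Real.sqrt μ₁ := fun x => rfl
  have hwr : ∀ y, w (Sum.inr y) = (if y ∈ U₂ then (1:ℝ) else 0) / Real.sqrt μ₂ := fun y => rfl
  have hw0 : ∀ a, 0 ≤ w a := by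
    rintro (x | y)
    · rw [hwl]; positivity
    · rw [hwr]; positivity
  have hsum1 : ∑ x : Finset (Fin n), (if x ∈ U₁ then m x else 0) = μ₁ := by
    rw [Finset.sum_ite_mem, Finset.univ_inter, hμ₁def]
    exact Finset.sum_congr rfl fun x _ => hm x
  have hsum2 : ∑ y : Finset (Fin n), (if y ∈ U₂ then m y else 0) = μ₂ := by
    rw [Finset.sum_ite_mem, Finset.univ_inter, hμ₂def]
    exact Finset.sum_congr rfl fun y _ => hm y
  -- diagonal quadratic sums
  have hA1 : ∑ x : Finset (Fin n), m x * (w (Sum.inl x) * w (Sum.inl x)) = μ₁ / μ₁ := by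
    have h : ∀ x : Finset (Fin n), m x * (w (Sum.inl x) * w (Sum.inl x))
        = (if x ∈ U₁ then m x else 0) / μ₁ := by
      intro x
      rw [hwl, div_mul_div_comm, Real.mul_self_sqrt hμ₁0]
      by_cases hx : x ∈ U₁ <;> simp [hx]
      ring
    rw [Finset.sum_congr rfl fun x _ => h x, ← Finset.sum_div, hsum1]
  have hA2 : ∑ y : Finset (Fin n), m y * (w (Sum.inr y) * w (Sum.inr y)) = μ₂ / μ₂ := by
    have h : ∀ y : Finset (Fin n), m y * (w (Sum.inr y) * w (Sum.inr y))
        = (if y ∈ U₂ then m y else 0) / μ₂ := by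
      intro y
      rw [hwr, div_mul_div_comm, Real.mul_self_sqrt hμ₂0]
      by_cases hy : y ∈ U₂ <;> simp [hy]
      ring
    rw [Finset.sum_congr rfl fun y _ => h y, ← Finset.sum_div, hsum2]
  -- linear sums
  have hB1 : ∑ x : Finset (Fin n), m x * w (Sum.inl x) = Real.sqrt μ₁ := by
    have h : ∀ x : Finset (Fin n), m x * w (Sum.inl x)
        = (if x ∈ U₁ then m x else 0) / Real.sqrt μ₁ := by
      intro x
      rw [hwl]
      by_cases hx : x ∈ U₁ <;> simp [hx, div_eq_mul_inv]
    rw [Finset.sum_congr rfl fun x _ => h x, ← Finset.sum_div, hsum1, Real.div_sqrt]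
  have hB2 : ∑ y : Finset (Fin n), m y * w (Sum.inr y) = Real.sqrt μ₂ := by
    have h : ∀ y : Finset (Fin n), m y * w (Sum.inr y)
        = (if y ∈ U₂ then m y else 0) / Real.sqrt μ₂ := by
      intro y
      rw [hwr]
      by_cases hy : y ∈ U₂ <;> simp [hy, div_eq_mul_inv]
    rw [Finset.sum_congr rfl fun y _ => h y, ← Finset.sum_div, hsum2, Real.div_sqrt]
  have hZs : ∀ a b, Z a b = Z b a := fun a b => congrFun (congrFun hZsymm b) a
  -- the γ terms vanish
  have hγ : ∀ x y, (if Adj x y then γ x y else 0) * (w (Sum.inl x) * w (Sum.inr y)) = 0 := by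
    intro x y
    by_cases hx : x ∈ U₁
    · by_cases hy : y ∈ U₂
      · simp [hcross x hx y hy]
      · rw [hwr]; simp [hy]
    · rw [hwl]; simp [hx]
  -- abbreviations for the Z block sums
  set Z11 := ∑ x : Finset (Fin n), ∑ x' : Finset (Fin n),
      Z (Sum.inl x) (Sum.inl x') * (w (Sum.inl x) * w (Sum.inl x')) with hZ11def
  set Z22 := ∑ y : Finset (Fin n), ∑ y' : Finset (Fin n),
      Z (Sum.inr y) (Sum.inr y') * (w (Sum.inr y) * w (Sum.inr y')) with hZ22def
  set Z12 := ∑ x : Finset (Fin n), ∑ y : Finset (Fin n),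
      Z (Sum.inl x) (Sum.inr y) * (w (Sum.inl x) * w (Sum.inr y)) with hZ12def
  set Z21 := ∑ y : Finset (Fin n), ∑ x : Finset (Fin n),
      Z (Sum.inr y) (Sum.inl x) * (w (Sum.inr y) * w (Sum.inl x)) with hZ21def
  -- block computations for S
  have e11 : ∑ x : Finset (Fin n), ∑ x' : Finset (Fin n),
      S (Sum.inl x) (Sum.inl x') * (w (Sum.inl x) * w (Sum.inl x'))
      = 1/2 * α * (μ₁ / μ₁) - Z11 := by
    simp only [hS11, sub_mul, Finset.sum_sub_distrib]
    rw [hZ11def]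
    congr 1
    have h : ∀ x x' : Finset (Fin n),
        1 / 2 * α * (if x = x' then m x else 0) * (w (Sum.inl x) * w (Sum.inl x'))
        = if x = x' then 1/2 * α * (m x * (w (Sum.inl x) * w (Sum.inl x'))) else 0 := by
      intro x x'
      split <;> ring
    calc ∑ x : Finset (Fin n), ∑ x' : Finset (Fin n),
          1 / 2 * α * (if x = x' then m x else 0) * (w (Sum.inl x) * w (Sum.inl x'))
        = ∑ x : Finset (Fin n), 1/2 * α * (m x * (w (Sum.inl x) * w (Sum.inl x))) := by
          refine Finset.sum_congr rfl fun x _ => ?_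
          rw [Finset.sum_congr rfl fun x' _ => h x x', Finset.sum_ite_eq]
          simp
      _ = 1/2 * α * (μ₁ / μ₁) := by rw [← Finset.mul_sum, hA1]
  have e22 : ∑ y : Finset (Fin n), ∑ y' : Finset (Fin n),
      S (Sum.inr y) (Sum.inr y') * (w (Sum.inr y) * w (Sum.inr y'))
      = 1/2 * α * (μ₂ / μ₂) - Z22 := by
    simp only [hS22, sub_mul, Finset.sum_sub_distrib]
    rw [hZ22def]
    congr 1
    have h : ∀ y y' : Finset (Fin n),
        1 / 2 * α * (if y = y' then m y else 0) * (w (Sum.inr y) * w (Sum.inr y'))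
        = if y = y' then 1/2 * α * (m y * (w (Sum.inr y) * w (Sum.inr y'))) else 0 := by
      intro y y'
      split <;> ring
    calc ∑ y : Finset (Fin n), ∑ y' : Finset (Fin n),
          1 / 2 * α * (if y = y' then m y else 0) * (w (Sum.inr y) * w (Sum.inr y'))
        = ∑ y : Finset (Fin n), 1/2 * α * (m y * (w (Sum.inr y) * w (Sum.inr y))) := by
          refine Finset.sum_congr rfl fun y _ => ?_
          rw [Finset.sum_congr rfl fun y' _ => h y y', Finset.sum_ite_eq]
          simp
      _ = 1/2 * α * (μ₂ / μ₂) := by rw [← Finset.mul_sum, hA2]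
  have e12 : ∑ x : Finset (Fin n), ∑ y : Finset (Fin n),
      S (Sum.inl x) (Sum.inr y) * (w (Sum.inl x) * w (Sum.inr y))
      = -(1/2) * (Real.sqrt μ₁ * Real.sqrt μ₂) - Z12 := by
    simp only [hS12, sub_mul, add_mul, Finset.sum_sub_distrib, Finset.sum_add_distrib]
    rw [hZ12def]
    have hγ0 : ∑ x : Finset (Fin n), ∑ y : Finset (Fin n),
        (if Adj x y then γ x y else 0) * (w (Sum.inl x) * w (Sum.inr y)) = 0 := by
      refine Finset.sum_eq_zero fun x _ => Finset.sum_eq_zero fun y _ => hγ x y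
    rw [hγ0, add_zero]
    congr 1
    calc ∑ x : Finset (Fin n), ∑ y : Finset (Fin n),
          -(1 / 2) * m x * m y * (w (Sum.inl x) * w (Sum.inr y))
        = ∑ x : Finset (Fin n), -(1/2) * (m x * w (Sum.inl x))
            * ∑ y : Finset (Fin n), m y * w (Sum.inr y) := by
          refine Finset.sum_congr rfl fun x _ => ?_
          rw [Finset.mul_sum]
          refine Finset.sum_congr rfl fun y _ => by ring
      _ = -(1/2) * (Real.sqrt μ₁ * Real.sqrt μ₂) := by
          rw [← Finset.sum_mul, hB2,
            show (∑ x : Finset (Fin n), -(1/2) * (m x * w (Sum.inl x)))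
              = -(1/2) * ∑ x : Finset (Fin n), m x * w (Sum.inl x) from by
                rw [Finset.mul_sum], hB1]
          ring
  have e21 : ∑ y : Finset (Fin n), ∑ x : Finset (Fin n),
      S (Sum.inr y) (Sum.inl x) * (w (Sum.inr y) * w (Sum.inl x))
      = -(1/2) * (Real.sqrt μ₁ * Real.sqrt μ₂) - Z21 := by
    have hswap : ∀ y x : Finset (Fin n),
        S (Sum.inr y) (Sum.inl x) * (w (Sum.inr y) * w (Sum.inl x))
        = S (Sum.inl x) (Sum.inr y) * (w (Sum.inl x) * w (Sum.inr y)) := by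
      intro y x
      rw [hS21]; ring
    have hZswap : Z21 = Z12 := by
      rw [hZ21def, hZ12def, Finset.sum_comm]
      refine Finset.sum_congr rfl fun x _ => Finset.sum_congr rfl fun y _ => ?_
      rw [hZs (Sum.inr y) (Sum.inl x)]; ring
    calc ∑ y : Finset (Fin n), ∑ x : Finset (Fin n),
          S (Sum.inr y) (Sum.inl x) * (w (Sum.inr y) * w (Sum.inl x))
        = ∑ y : Finset (Fin n), ∑ x : Finset (Fin n),
          S (Sum.inl x) (Sum.inr y) * (w (Sum.inl x) * w (Sum.inr y)) := by
          exact Finset.sum_congr rfl fun y _ => Finset.sum_congr rfl fun x _ => hswap y x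
      _ = ∑ x : Finset (Fin n), ∑ y : Finset (Fin n),
          S (Sum.inl x) (Sum.inr y) * (w (Sum.inl x) * w (Sum.inr y)) := Finset.sum_comm
      _ = -(1/2) * (Real.sqrt μ₁ * Real.sqrt μ₂) - Z12 := e12
      _ = -(1/2) * (Real.sqrt μ₁ * Real.sqrt μ₂) - Z21 := by rw [hZswap]
  -- dotM expansions
  have hsplit : ∀ (M : Matrix (Finset (Fin n) ⊕ Finset (Fin n))
      (Finset (Fin n) ⊕ Finset (Fin n)) ℝ),
      dotM M (Matrix.of fun a b => w a * w b)
      = (∑ x : Finset (Fin n), ∑ x' : Finset (Fin n),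
          M (Sum.inl x) (Sum.inl x') * (w (Sum.inl x) * w (Sum.inl x')))
        + (∑ x : Finset (Fin n), ∑ y : Finset (Fin n),
          M (Sum.inl x) (Sum.inr y) * (w (Sum.inl x) * w (Sum.inr y)))
        + ((∑ y : Finset (Fin n), ∑ x : Finset (Fin n),
          M (Sum.inr y) (Sum.inl x) * (w (Sum.inr y) * w (Sum.inl x)))
        + (∑ y : Finset (Fin n), ∑ y' : Finset (Fin n),
          M (Sum.inr y) (Sum.inr y') * (w (Sum.inr y) * w (Sum.inr y')))) := by
    intro M
    unfold dotM
    simp only [Fintype.sum_sum_type, Matrix.of_apply, Finset.sum_add_distrib]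
    ring
  have hdotS : dotM S (Matrix.of fun a b => w a * w b)
      = α/2 * (μ₁/μ₁) + α/2 * (μ₂/μ₂) - Real.sqrt μ₁ * Real.sqrt μ₂
        - dotM Z (Matrix.of fun a b => w a * w b) := by
    rw [hsplit S, hsplit Z, e11, e12, e21, e22, ← hZ11def, ← hZ12def, ← hZ21def, ← hZ22def]
    ring
  -- positivity facts
  have hSX : 0 ≤ dotM S (Matrix.of fun a b => w a * w b) := by
    have h := hSpsd.dotProduct_mulVec_nonneg w
    have heq : star w ⬝ᵥ S.mulVec w = dotM S (Matrix.of fun a b => w a * w b) := by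
      unfold dotM
      simp only [dotProduct, Matrix.mulVec, Matrix.of_apply, Pi.star_apply,
        star_trivial, Finset.mul_sum]
      refine Finset.sum_congr rfl fun a _ => Finset.sum_congr rfl fun b _ => by ring
    rw [← heq]
    exact h
  have hZX : 0 ≤ dotM Z (Matrix.of fun a b => w a * w b) := by
    unfold dotM
    refine Finset.sum_nonneg fun a _ => Finset.sum_nonneg fun b _ => ?_
    have h1 := hZnonneg a b
    have h2 := hw0 a
    have h3 := hw0 b
    simp only [Matrix.of_apply]
    positivity
  have hsqrt : Real.sqrt μ₁ * Real.sqrt μ₂ * (Real.sqrt μ₁ * Real.sqrt μ₂) = μ₁ * μ₂ := by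
    rw [show Real.sqrt μ₁ * Real.sqrt μ₂ * (Real.sqrt μ₁ * Real.sqrt μ₂)
        = (Real.sqrt μ₁ * Real.sqrt μ₁) * (Real.sqrt μ₂ * Real.sqrt μ₂) from by ring,
      Real.mul_self_sqrt hμ₁0, Real.mul_self_sqrt hμ₂0]
  have hs0 : 0 ≤ Real.sqrt μ₁ * Real.sqrt μ₂ :=
    mul_nonneg (Real.sqrt_nonneg _) (Real.sqrt_nonneg _)
  constructor
  · -- the inequality
    by_cases h1 : μ₁ = 0
    · rw [h1, zero_mul]; positivity
    by_cases h2 : μ₂ = 0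
    · rw [h2, mul_zero]; positivity
    have hd1 : μ₁ / μ₁ = 1 := div_self h1
    have hd2 : μ₂ / μ₂ = 1 := div_self h2
    rw [hd1, hd2] at hdotS
    have hle : Real.sqrt μ₁ * Real.sqrt μ₂ ≤ α := by linarith [hdotS, hSX, hZX]
    nlinarith [hsqrt]
  · -- equality / complementary slackness
    intro hEq
    by_cases h1 : μ₁ = 0
    · have hα2 : α ^ 2 = 0 := by rw [← hEq, h1, zero_mul]
      have hα : α = 0 := by nlinarith [sq_nonneg α]
      have hsq1 : Real.sqrt μ₁ = 0 := by rw [h1, Real.sqrt_zero]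
      have h' : dotM S (Matrix.of fun a b => w a * w b)
          = - dotM Z (Matrix.of fun a b => w a * w b) := by
        rw [hdotS, hα, hsq1]; ring
      constructor <;> linarith [hSX, hZX, h']
    by_cases h2 : μ₂ = 0
    · have hα2 : α ^ 2 = 0 := by rw [← hEq, h2, mul_zero]
      have hα : α = 0 := by nlinarith [sq_nonneg α]
      have hsq2 : Real.sqrt μ₂ = 0 := by rw [h2, Real.sqrt_zero]
      have h' : dotM S (Matrix.of fun a b => w a * w b)
          = - dotM Z (Matrix.of fun a b => w a * w b) := by
        rw [hdotS, hα, hsq2]; ring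
      constructor <;> linarith [hSX, hZX, h']
    · have hd1 : μ₁ / μ₁ = 1 := div_self h1
      have hd2 : μ₂ / μ₂ = 1 := div_self h2
      rw [hd1, hd2] at hdotS
      have hle : Real.sqrt μ₁ * Real.sqrt μ₂ ≤ α := by linarith [hdotS, hSX, hZX]
      have hαs : α = Real.sqrt μ₁ * Real.sqrt μ₂ := by
        refine le_antisymm ?_ hle
        nlinarith [hsqrt, hEq, hle, hs0]
      have h' : dotM S (Matrix.of fun a b => w a * w b)
          = - dotM Z (Matrix.of fun a b => w a * w b) := by
        rw [hdotS, hαs]; ring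
      constructor <;> linarith [hSX, hZX, h']
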